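/- There exists a constant C > 0 such that for all ξ, η ∈ ℝ³ with η ≠ 0 and η ≠ ξ, the Laplacian of Φ₁ in η, namely Δ_ηΦ₁(ξ,η) = −(p''(|ξ−η|) + 2p'(|ξ−η|)/|ξ−η|) − (p''(|η|) + 2p'(|η|)/|η|), satisfies |Δ_ηΦ₁(ξ,η)| ≤ C / min(|ξ−η|, |η|). -/

import Mathlib

noncomputable def q (r : ℝ) : ℝ := Real.sqrt ((2 + r ^ 2) / (1 + r ^ 2))
noncomputable def p (r : ℝ) : ℝ := r * q r
noncomputable def Φ₁ (ξ η : EuclideanSpace ℝ (Fin 3)) : ℝ :=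
  p ‖ξ‖ - p ‖ξ - η‖ - p ‖η‖

noncomputable def gg (r : ℝ) : ℝ := (2 + r ^ 2) / (1 + r ^ 2)
noncomputable def ss (r : ℝ) : ℝ := Real.sqrt (gg r)
noncomputable def P1 (r : ℝ) : ℝ := ss r - r ^ 2 / ((1 + r ^ 2) ^ 2 * ss r)
noncomputable def P2 (r : ℝ) : ℝ :=
  -3 * r / ((1 + r ^ 2) ^ 2 * ss r) + 4 * r ^ 3 / ((1 + r ^ 2) ^ 3 * ss r)
    - r ^ 3 / ((1 + r ^ 2) ^ 4 * ss r ^ 3)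

lemma gg_pos (r : ℝ) : 0 < gg r := div_pos (by positivity) (by positivity)

lemma one_le_gg (r : ℝ) : 1 ≤ gg r := by
  rw [gg, le_div_iff₀ (by positivity)]; nlinarith

lemma gg_le_two (r : ℝ) : gg r ≤ 2 := by
  rw [gg, div_le_iff₀ (by positivity)]; nlinarith

lemma ss_pos (r : ℝ) : 0 < ss r := Real.sqrt_pos.mpr (gg_pos r)

lemma one_le_ss (r : ℝ) : 1 ≤ ss r := by
  have := Real.sqrt_le_sqrt (one_le_gg r)
  simpa [ss] using this

lemma ss_le (r : ℝ) : ss r ≤ 3/2 := by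
  have h1 : ss r ^ 2 = gg r := Real.sq_sqrt (gg_pos r).le
  have h2 := gg_le_two r
  nlinarith [ss_pos r]

lemma hasDerivAt_gg (r : ℝ) :
    HasDerivAt gg (-2 * r / (1 + r ^ 2) ^ 2) r := by
  have h1 : HasDerivAt (fun x : ℝ => 2 + x ^ 2) (2 * r) r := by
    simpa using (hasDerivAt_pow 2 r).const_add 2
  have h2 : HasDerivAt (fun x : ℝ => 1 + x ^ 2) (2 * r) r := by
    simpa using (hasDerivAt_pow 2 r).const_add 1
  have hne : (1 + r ^ 2) ≠ 0 := by positivity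
  have := h1.div h2 hne
  refine this.congr_deriv ?_
  field_simp
  ring

lemma hasDerivAt_q (r : ℝ) :
    HasDerivAt q (-r / ((1 + r ^ 2) ^ 2 * ss r)) r := by
  have h := (Real.hasDerivAt_sqrt (gg_pos r).ne').comp r (hasDerivAt_gg r)
  have hq : q = fun x => Real.sqrt (gg x) := by funext x; rfl
  rw [hq]
  refine h.congr_deriv ?_
  have hs : ss r ≠ 0 := (ss_pos r).ne'
  have hd : (1 + r ^ 2) ≠ 0 := by positivity
  rw [ss] at hs ⊢
  field_simp

lemma hasDerivAt_p (r : ℝ) : HasDerivAt p (P1 r) r := by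
  have h := (hasDerivAt_id r).mul (hasDerivAt_q r)
  have hp : p = fun x => x * q x := by funext x; rfl
  rw [hp]
  refine h.congr_deriv ?_
  have hs : ss r ≠ 0 := (ss_pos r).ne'
  have hd : ((1 + r ^ 2) : ℝ) ≠ 0 := by positivity
  have hq : q r = ss r := rfl
  rw [P1, hq, id_eq]
  field_simp
  ring

lemma deriv_p : deriv p = P1 := funext fun r => (hasDerivAt_p r).deriv

lemma hasDerivAt_P1 (r : ℝ) : HasDerivAt P1 (P2 r) r := by
  have hden : HasDerivAt (fun x : ℝ => (1 + x ^ 2) ^ 2 * ss x)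
      (2 * (1 + r ^ 2) * (2 * r) * ss r +
        (1 + r ^ 2) ^ 2 * (-r / ((1 + r ^ 2) ^ 2 * ss r))) r := by
    have h2 : HasDerivAt (fun x : ℝ => 1 + x ^ 2) (2 * r) r := by
      simpa using (hasDerivAt_pow 2 r).const_add 1
    have h3 : HasDerivAt (fun x : ℝ => (1 + x ^ 2) ^ 2)
        (2 * (1 + r ^ 2) ^ (2 - 1) * (2 * r)) r := h2.pow 2
    have h4 : HasDerivAt ss (-r / ((1 + r ^ 2) ^ 2 * ss r)) r := by
      have := hasDerivAt_q r
      have : q = ss := by funext x; rfl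
      rw [← this]; exact hasDerivAt_q r
    simpa [pow_one, Pi.mul_def] using h3.mul h4
  have hnum : HasDerivAt (fun x : ℝ => x ^ 2) (2 * r) r := by
    simpa using hasDerivAt_pow 2 r
  have hdne : (1 + r ^ 2) ^ 2 * ss r ≠ 0 := by
    have := ss_pos r; positivity
  have hfrac := hnum.div hden hdne
  have h4 : HasDerivAt ss (-r / ((1 + r ^ 2) ^ 2 * ss r)) r := by
    have : q = ss := by funext x; rfl
    rw [← this]; exact hasDerivAt_q r
  have h := h4.sub hfrac
  have hP1 : P1 = fun x => ss x - x ^ 2 / ((1 + x ^ 2) ^ 2 * ss x) := by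
    funext x; rfl
  rw [hP1]
  refine h.congr_deriv ?_
  have hs : ss r ≠ 0 := (ss_pos r).ne'
  have hd : ((1 + r ^ 2) : ℝ) ≠ 0 := by positivity
  rw [P2]
  field_simp
  ring

lemma deriv_deriv_p : deriv (deriv p) = P2 := by
  rw [deriv_p]; exact funext fun r => (hasDerivAt_P1 r).deriv

lemma key_bound (r : ℝ) (hr : 0 < r) : |r * P2 r + 2 * P1 r| ≤ 13 := by
  have hs1 := one_le_ss r
  have hs2 := ss_le r
  have hsp := ss_pos r
  have hd : (0:ℝ) < 1 + r ^ 2 := by positivity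
  have hA : r ^ 4 ≤ (1 + r ^ 2) ^ 2 := by nlinarith [sq_nonneg r]
  have hB : (1 + r ^ 2) ^ 2 ≤ (1 + r ^ 2) ^ 3 := by nlinarith [pow_pos hd 2]
  have hC : (1 + r ^ 2) ^ 3 ≤ (1 + r ^ 2) ^ 4 := by nlinarith [pow_pos hd 3]
  have hs3 : 1 ≤ ss r ^ 3 := by nlinarith [sq_nonneg (ss r - 1), sq_nonneg (ss r + 1)]
  have he : r * P2 r + 2 * P1 r =
      2 * ss r - 5 * (r ^ 2 / ((1 + r ^ 2) ^ 2 * ss r)) +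
        4 * (r ^ 4 / ((1 + r ^ 2) ^ 3 * ss r)) - r ^ 4 / ((1 + r ^ 2) ^ 4 * ss r ^ 3) := by
    rw [P2, P1]
    field_simp
    ring
  have t2 : r ^ 2 / ((1 + r ^ 2) ^ 2 * ss r) ≤ 1 := by
    rw [div_le_one (by positivity)]
    nlinarith
  have t2' : 0 ≤ r ^ 2 / ((1 + r ^ 2) ^ 2 * ss r) := by positivity
  have t3 : r ^ 4 / ((1 + r ^ 2) ^ 3 * ss r) ≤ 1 := by
    rw [div_le_one (by positivity)]
    nlinarith [pow_pos hd 3]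
  have t3' : 0 ≤ r ^ 4 / ((1 + r ^ 2) ^ 3 * ss r) := by positivity
  have t4 : r ^ 4 / ((1 + r ^ 2) ^ 4 * ss r ^ 3) ≤ 1 := by
    rw [div_le_one (by positivity)]
    nlinarith [pow_pos hd 4]
  have t4' : 0 ≤ r ^ 4 / ((1 + r ^ 2) ^ 4 * ss r ^ 3) := by positivity
  rw [he, abs_le]
  constructor <;> nlinarith

lemma key (r : ℝ) (hr : 0 < r) :
    |deriv (deriv p) r + 2 * deriv p r / r| ≤ 13 / r := by
  rw [deriv_deriv_p, deriv_p]
  have h : P2 r + 2 * P1 r / r = (r * P2 r + 2 * P1 r) / r := by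
    field_simp
  rw [h, abs_div, abs_of_pos hr]
  gcongr
  exact key_bound r hr

theorem stmt11 :
    ∃ C : ℝ, 0 < C ∧
      ∀ ξ η : EuclideanSpace ℝ (Fin 3), η ≠ 0 → η ≠ ξ →
        |-(deriv (deriv p) ‖ξ - η‖ + 2 * deriv p ‖ξ - η‖ / ‖ξ - η‖) -
            (deriv (deriv p) ‖η‖ + 2 * deriv p ‖η‖ / ‖η‖)| ≤
          C / min ‖ξ - η‖ ‖η‖ := by
  refine ⟨26, by norm_num, fun ξ η hη hηξ => ?_⟩
  have h1 : (0:ℝ) < ‖ξ - η‖ := by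
    rw [norm_pos_iff, sub_ne_zero]; exact fun h => hηξ h.symm
  have h2 : (0:ℝ) < ‖η‖ := norm_pos_iff.mpr hη
  have hm : (0:ℝ) < min ‖ξ - η‖ ‖η‖ := lt_min h1 h2
  have k1 := key _ h1
  have k2 := key _ h2
  have b1 : (13:ℝ) / ‖ξ - η‖ ≤ 13 / min ‖ξ - η‖ ‖η‖ :=
    div_le_div_of_nonneg_left (by norm_num) hm (min_le_left _ _)
  have b2 : (13:ℝ) / ‖η‖ ≤ 13 / min ‖ξ - η‖ ‖η‖ :=
    div_le_div_of_nonneg_left (by norm_num) hm (min_le_right _ _)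
  have habs : |-(deriv (deriv p) ‖ξ - η‖ + 2 * deriv p ‖ξ - η‖ / ‖ξ - η‖) -
      (deriv (deriv p) ‖η‖ + 2 * deriv p ‖η‖ / ‖η‖)| ≤
      |deriv (deriv p) ‖ξ - η‖ + 2 * deriv p ‖ξ - η‖ / ‖ξ - η‖| +
      |deriv (deriv p) ‖η‖ + 2 * deriv p ‖η‖ / ‖η‖| := by
    have h := abs_add_le (-(deriv (deriv p) ‖ξ - η‖ + 2 * deriv p ‖ξ - η‖ / ‖ξ - η‖))
      (-(deriv (deriv p) ‖η‖ + 2 * deriv p ‖η‖ / ‖η‖))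
    rw [abs_neg, abs_neg] at h
    rw [sub_eq_add_neg]
    exact h
  have hfin : (13:ℝ) / min ‖ξ - η‖ ‖η‖ + 13 / min ‖ξ - η‖ ‖η‖ = 26 / min ‖ξ - η‖ ‖η‖ := by
    ring
  linarith
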